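/- Let G be a finite connected simple graph with at least 3 vertices that is not non-separable, and let c be an articulation point of G. Then the number k of connected components of G − c satisfies k ≥ 2, and the subgraphs B_1^+, …, B_k^+ — where B_i is the i-th connected component of G − c and B_i^+ is the subgraph of G on vertex set V(B_i) ∪ {c} with all edges of G having both endpoints in V(B_i) ∪ {c} — together with 𝓒 = {c} form a generalized block-cut set ({B_1^+, …, B_k^+}, {c}) of G whose bipartite incidence graph (vertices {B_1^+, …, B_k^+} ⊔ {c}, with an edge from each B_i^+ to c) is a star, and in particular a tree. -/

import Mathlib

variable {V : Type} [Fintype V] [DecidableEq V]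

/-- `c` is an articulation point (cut-point) of the subgraph `B`: removing `c`
increases the number of connected components. -/
def IsArtic (G : SimpleGraph V) (B : G.Subgraph) (c : V) : Prop :=
  c ∈ B.verts ∧
  Nat.card B.coe.ConnectedComponent <
    Nat.card ((B.deleteVerts {c}).coe.ConnectedComponent)

/-- The vertex sets (as subsets of `V`) of the connected components of `B − c`. -/
def compVertexSets (G : SimpleGraph V) (B : G.Subgraph) (c : V) : Set (Set V) :=
  {S | ∃ Kc : (B.deleteVerts {c}).coe.ConnectedComponent,
        S = Subtype.val ''
          {x | (B.deleteVerts {c}).coe.connectedComponentMk x = Kc}}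

/-- For each connected component `S` of `B − c`, the subgraph `B_i⁺` of `B`
on vertex set `S ∪ {c}` with all edges of `B` having both endpoints therein. -/
def splitBlocks (G : SimpleGraph V) (B : G.Subgraph) (c : V) : Set G.Subgraph :=
  (fun S => B.induce (S ∪ {c})) '' compVertexSets G B c

/-- A generalized block-cut set `(𝓑, 𝓒)` of `G`: a finite set of connected
subgraphs whose edge sets cover `E(G)`, any two of which intersect in at most
a single vertex, which then belongs to `𝓒`. -/
def IsGBC (G : SimpleGraph V) (𝓑 : Set G.Subgraph) (𝓒 : Set V) : Prop :=
  𝓑.Finite ∧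
  (∀ B ∈ 𝓑, B.Connected) ∧
  (⋃ B ∈ 𝓑, B.edgeSet) = G.edgeSet ∧
  (∀ B₁ ∈ 𝓑, ∀ B₂ ∈ 𝓑, B₁ ≠ B₂ → (B₁.verts ∩ B₂.verts).Nonempty →
    ∃ c ∈ 𝓒, B₁.verts ∩ B₂.verts = {c})

/-- A connected subgraph is non-separable if it has no articulation point. -/
def IsNonsep (G : SimpleGraph V) (B : G.Subgraph) : Prop :=
  B.Connected ∧ ∀ c : V, ¬ IsArtic G B c

/-- The bipartite incidence graph `bc(G; 𝓑, 𝓒)` on vertex set `𝓑 ⊔ 𝓒`,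
with an edge joining `B ∈ 𝓑` and `c ∈ 𝓒` exactly when `c ∈ V(B)`. -/
def bcGraph (G : SimpleGraph V) (𝓑 : Set G.Subgraph) (𝓒 : Set V) :
    SimpleGraph (↥𝓑 ⊕ ↥𝓒) where
  Adj x y :=
    match x, y with
    | Sum.inl B, Sum.inr c => (c : V) ∈ (B : G.Subgraph).verts
    | Sum.inr c, Sum.inl B => (c : V) ∈ (B : G.Subgraph).verts
    | _, _ => False
  symm := by
    constructor
    intro x y h
    cases x <;> cases y <;> simp_all
  loopless := by
    constructor
    intro x
    cases x <;> simp

section Aux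

open SimpleGraph

variable (G : SimpleGraph V) (c : V)

/-- The subgraph `G − c`. -/
abbrev Dlt : G.Subgraph := (⊤ : G.Subgraph).deleteVerts {c}

/-- Vertex set (in `V`) of a connected component of `G − c`. -/
def fcomp (K : (Dlt G c).coe.ConnectedComponent) : Set V :=
  Subtype.val '' K.supp

variable {G c}

lemma mem_Dlt {v : V} : v ∈ (Dlt G c).verts ↔ v ≠ c := by
  simp [Dlt]

lemma mem_fcomp_iff {K : (Dlt G c).coe.ConnectedComponent} {v : V} :
    v ∈ fcomp G c K ↔ ∃ h : v ∈ (Dlt G c).verts,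
      (Dlt G c).coe.connectedComponentMk ⟨v, h⟩ = K := by
  constructor
  · rintro ⟨⟨x, hx⟩, hK, rfl⟩; exact ⟨hx, hK⟩
  · rintro ⟨h, hK⟩; exact ⟨⟨v, h⟩, hK, rfl⟩

lemma ne_c_of_mem_fcomp {K : (Dlt G c).coe.ConnectedComponent} {v : V}
    (h : v ∈ fcomp G c K) : v ≠ c := by
  obtain ⟨h', -⟩ := mem_fcomp_iff.mp h
  exact mem_Dlt.mp h'

lemma compVertexSets_eq : compVertexSets G (⊤ : G.Subgraph) c = Set.range (fcomp G c) := by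
  ext S
  constructor
  · rintro ⟨K, h⟩; exact ⟨K, h.symm⟩
  · rintro ⟨K, h⟩; exact ⟨K, h.symm⟩

lemma fcomp_injective : Function.Injective (fcomp G c) := fun K₁ K₂ h =>
  SimpleGraph.ConnectedComponent.supp_injective
    (Set.image_injective.mpr Subtype.val_injective h)

lemma fcomp_eq_of_mem {K₁ K₂ : (Dlt G c).coe.ConnectedComponent} {v : V}
    (h₁ : v ∈ fcomp G c K₁) (h₂ : v ∈ fcomp G c K₂) : K₁ = K₂ := by
  obtain ⟨hv, hK₁⟩ := mem_fcomp_iff.mp h₁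
  obtain ⟨hv', hK₂⟩ := mem_fcomp_iff.mp h₂
  rw [← hK₁, ← hK₂]

lemma adj_mem_fcomp {K : (Dlt G c).coe.ConnectedComponent} {v w : V}
    (hv : v ∈ fcomp G c K) (hw : w ≠ c) (h : G.Adj v w) : w ∈ fcomp G c K := by
  obtain ⟨hv', hK⟩ := mem_fcomp_iff.mp hv
  have hvc : v ≠ c := mem_Dlt.mp hv'
  have hw' : w ∈ (Dlt G c).verts := mem_Dlt.mpr hw
  have hadj : (Dlt G c).coe.Adj ⟨v, hv'⟩ ⟨w, hw'⟩ := by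
    simp only [Subgraph.coe_adj, Subgraph.deleteVerts_adj, Subgraph.verts_top,
      Set.mem_univ, Set.mem_singleton_iff, Subgraph.top_adj, true_and]
    exact ⟨hvc, hw, h⟩
  refine mem_fcomp_iff.mpr ⟨hw', ?_⟩
  rw [← hK]
  exact (SimpleGraph.ConnectedComponent.connectedComponentMk_eq_of_adj hadj.symm)

lemma reach_to_c {K : (Dlt G c).coe.ConnectedComponent} :
    ∀ (v w : V) (_ : G.Walk v w) (_ : c = w) (hv : v ∈ fcomp G c K ∪ {c}),
    ((⊤ : G.Subgraph).induce (fcomp G c K ∪ {c})).coe.Reachable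
      ⟨v, hv⟩ ⟨c, Or.inr rfl⟩ := by
  intro v w p
  induction p with
  | nil =>
    rintro rfl hv
    exact Reachable.refl _
  | @cons a b w' h q ih =>
    rintro rfl hv
    rcases hv with hv | hv
    · by_cases hbc : b = c
      · subst hbc
        refine Adj.reachable ?_
        simp only [Subgraph.coe_adj, Subgraph.induce_adj, Subgraph.top_adj]
        exact ⟨Or.inl hv, Or.inr rfl, h⟩
      · have hb : b ∈ fcomp G c K := adj_mem_fcomp hv hbc h
        have hadj : ((⊤ : G.Subgraph).induce (fcomp G c K ∪ {c})).coe.Adj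
            ⟨a, Or.inl hv⟩ ⟨b, Or.inl hb⟩ := by
          simp only [Subgraph.coe_adj, Subgraph.induce_adj, Subgraph.top_adj]
          exact ⟨Or.inl hv, Or.inl hb, h⟩
        exact hadj.reachable.trans (ih rfl (Or.inl hb))
    · have hac : a = c := hv
      subst hac
      exact Reachable.refl _

lemma splitBlock_connected (hG : G.Connected) (K : (Dlt G c).coe.ConnectedComponent) :
    ((⊤ : G.Subgraph).induce (fcomp G c K ∪ {c})).Connected := by
  rw [SimpleGraph.Subgraph.connected_iff]
  refine ⟨⟨?_⟩, ⟨c, Or.inr rfl⟩⟩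
  rintro ⟨a, ha⟩ ⟨b, hb⟩
  obtain ⟨pa⟩ := hG.preconnected a c
  obtain ⟨pb⟩ := hG.preconnected b c
  exact (reach_to_c a c pa rfl ha).trans (reach_to_c b c pb rfl hb).symm

lemma splitBlocks_eq :
    splitBlocks G (⊤ : G.Subgraph) c =
      Set.range (fun K => (⊤ : G.Subgraph).induce (fcomp G c K ∪ {c})) := by
  rw [splitBlocks, compVertexSets_eq, ← Set.range_comp]
  rfl

end Aux

/-- Splitting a separable connected graph `G` at an articulation point `c`
yields a generalized block-cut set `({B_1⁺, …, B_k⁺}, {c})` with `k ≥ 2`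
whose bipartite incidence graph is a star (each `B_i⁺` joined to `c`), and
in particular a tree. -/
theorem split_whole_graph_at_articulation_point
    (G : SimpleGraph V) (hG : G.Connected) (hcard : 3 ≤ Fintype.card V)
    (hsep : ¬ IsNonsep G (⊤ : G.Subgraph))
    (c : V) (hc : IsArtic G (⊤ : G.Subgraph) c) :
    2 ≤ (compVertexSets G (⊤ : G.Subgraph) c).ncard ∧
    IsGBC G (splitBlocks G (⊤ : G.Subgraph) c) {c} ∧
    (∀ B : ↥(splitBlocks G (⊤ : G.Subgraph) c),
      (bcGraph G (splitBlocks G (⊤ : G.Subgraph) c) {c}).Adj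
        (Sum.inl B) (Sum.inr ⟨c, rfl⟩)) ∧
    (bcGraph G (splitBlocks G (⊤ : G.Subgraph) c) {c}).IsTree := by
  classical
  -- Part 1 : at least two components
  have hV : Nonempty V := Fintype.card_pos_iff.mp (by omega)
  have hone : 0 < Nat.card ((⊤ : G.Subgraph).coe.ConnectedComponent) := by
    have : Nonempty ((⊤ : G.Subgraph).coe.ConnectedComponent) := by
      obtain ⟨v⟩ := hV
      exact ⟨(⊤ : G.Subgraph).coe.connectedComponentMk ⟨v, Set.mem_univ v⟩⟩
    exact Nat.card_pos
  have h2 : 2 ≤ Nat.card ((Dlt G c).coe.ConnectedComponent) := by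
    have h := hc.2
    show 2 ≤ Nat.card (((⊤ : G.Subgraph).deleteVerts {c}).coe.ConnectedComponent)
    omega
  have hncard : (compVertexSets G (⊤ : G.Subgraph) c).ncard
      = Nat.card ((Dlt G c).coe.ConnectedComponent) := by
    rw [compVertexSets_eq, ← Nat.card_coe_set_eq,
      Nat.card_range_of_injective fcomp_injective]
  refine ⟨by rw [hncard]; exact h2, ?_, ?_, ?_⟩
  · -- IsGBC
    refine ⟨?_, ?_, ?_, ?_⟩
    · rw [splitBlocks_eq]; exact Set.finite_range _
    · intro B hB
      rw [splitBlocks_eq] at hB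
      obtain ⟨K, rfl⟩ := hB
      exact splitBlock_connected hG K
    · ext e
      induction e using Sym2.ind with
      | _ a b =>
        simp only [Set.mem_iUnion, SimpleGraph.Subgraph.mem_edgeSet,
          SimpleGraph.mem_edgeSet, splitBlocks_eq, Set.mem_range, exists_prop]
        constructor
        · rintro ⟨B, ⟨K, rfl⟩, hadj⟩
          exact hadj.adj_sub
        · intro hab
          by_cases hac : a = c
          · have hbc : b ≠ c := fun h => hab.ne (hac.trans h.symm)
            refine ⟨_, ⟨(Dlt G c).coe.connectedComponentMk ⟨b, mem_Dlt.mpr hbc⟩, rfl⟩, ?_⟩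
            rw [SimpleGraph.Subgraph.induce_adj]
            exact ⟨Or.inr hac, Or.inl (mem_fcomp_iff.mpr ⟨mem_Dlt.mpr hbc, rfl⟩), hab⟩
          · by_cases hbc : b = c
            · refine ⟨_, ⟨(Dlt G c).coe.connectedComponentMk ⟨a, mem_Dlt.mpr hac⟩, rfl⟩, ?_⟩
              rw [SimpleGraph.Subgraph.induce_adj]
              exact ⟨Or.inl (mem_fcomp_iff.mpr ⟨mem_Dlt.mpr hac, rfl⟩), Or.inr hbc, hab⟩
            · have haK : a ∈ fcomp G c ((Dlt G c).coe.connectedComponentMk ⟨a, mem_Dlt.mpr hac⟩) :=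
                mem_fcomp_iff.mpr ⟨mem_Dlt.mpr hac, rfl⟩
              refine ⟨_, ⟨(Dlt G c).coe.connectedComponentMk ⟨a, mem_Dlt.mpr hac⟩, rfl⟩, ?_⟩
              rw [SimpleGraph.Subgraph.induce_adj]
              exact ⟨Or.inl haK, Or.inl (adj_mem_fcomp haK hbc hab), hab⟩
    · intro B₁ hB₁ B₂ hB₂ hne _
      rw [splitBlocks_eq] at hB₁ hB₂
      obtain ⟨K₁, rfl⟩ := hB₁
      obtain ⟨K₂, rfl⟩ := hB₂
      have hK : K₁ ≠ K₂ := fun h => hne (by rw [h])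
      refine ⟨c, rfl, ?_⟩
      simp only [SimpleGraph.Subgraph.induce_verts]
      ext v
      simp only [Set.mem_inter_iff, Set.mem_union, Set.mem_singleton_iff]
      constructor
      · rintro ⟨h₁ | h₁, h₂ | h₂⟩
        · exact absurd (fcomp_eq_of_mem h₁ h₂) hK
        · exact h₂
        · exact h₁
        · exact h₁
      · rintro rfl; exact ⟨Or.inr rfl, Or.inr rfl⟩
  · -- star adjacency
    rintro ⟨B, hB⟩
    rw [splitBlocks_eq] at hB
    obtain ⟨K, rfl⟩ := hB
    show (c : V) ∈ ((⊤ : G.Subgraph).induce (fcomp G c K ∪ {c})).verts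
    exact Or.inr rfl
  · -- tree
    have hstar : ∀ B : ↥(splitBlocks G (⊤ : G.Subgraph) c),
        (bcGraph G (splitBlocks G (⊤ : G.Subgraph) c) {c}).Adj
          (Sum.inl B) (Sum.inr ⟨c, rfl⟩) := by
      rintro ⟨B, hB⟩
      rw [splitBlocks_eq] at hB
      obtain ⟨K, rfl⟩ := hB
      show (c : V) ∈ ((⊤ : G.Subgraph).induce (fcomp G c K ∪ {c})).verts
      exact Or.inr rfl
    have hsub : ∀ d : ↥({c} : Set V), d = ⟨c, rfl⟩ := fun d => Subtype.ext d.2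
    have hkey : ∀ x, (bcGraph G (splitBlocks G (⊤ : G.Subgraph) c) {c}).Reachable
        x (Sum.inr ⟨c, rfl⟩) := by
      intro x
      cases x with
      | inl B => exact (hstar B).reachable
      | inr d => rw [hsub d]
    have hconn : (bcGraph G (splitBlocks G (⊤ : G.Subgraph) c) {c}).Connected := by
      have : Nonempty (↥(splitBlocks G (⊤ : G.Subgraph) c) ⊕ ↥({c} : Set V)) :=
        ⟨Sum.inr ⟨c, rfl⟩⟩
      exact ⟨fun u v => (hkey u).trans (hkey v).symm⟩
    refine ⟨hconn, ?_⟩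
    intro v p hp
    cases p with
    | nil => simpa using hp.three_le_length
    | @cons _ x₁ _ h₁ p₁ =>
      cases p₁ with
      | nil => simpa using hp.three_le_length
      | @cons _ x₂ _ h₂ p₂ =>
        cases p₂ with
        | nil => simpa using hp.three_le_length
        | @cons _ x₃ _ h₃ q =>
          have hnodup := hp.support_nodup
          simp only [SimpleGraph.Walk.support_cons, List.tail_cons, List.nodup_cons] at hnodup
          cases v with
          | inl B =>
            cases x₁ with
            | inl B₁ => exact h₁
            | inr d₁ =>
              cases x₂ with
              | inr d₂ => exact h₂
              | inl B₂ =>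
                cases x₃ with
                | inl B₃ => exact h₃
                | inr d₃ =>
                  have hd : d₁ = d₃ := by rw [hsub d₁, hsub d₃]
                  have hmem : (Sum.inr d₁ : _) ∈ q.support := by
                    rw [hd]; exact q.start_mem_support
                  exact hnodup.1 (List.mem_cons_of_mem _ hmem)
          | inr d =>
            cases x₁ with
            | inr d₁ => exact h₁
            | inl B₁ =>
              cases x₂ with
              | inl B₂ => exact h₂
              | inr d₂ =>
                have hd : d₂ = d := by rw [hsub d₂, hsub d]
                have hmem : (Sum.inr d₂ : _) ∈ q.support := by
                  rw [hd]; exact q.end_mem_support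
                exact hnodup.2.1 hmem
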